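/- Let G : R^n → R^p be C¹ with T_G ∈ R^{n×p} satisfying T_G ∇G(η) + (∇G(η))^T T_G^T ≥ ρ_G I_n for all η with ρ_G > 0. Define W : R^{1+n} → R^{1+2p} by W(θ₁, η) = (θ₁, G(η), θ₁·G(η)), and T = [[1, 0_{1×p}, 0_{1×p}], [0_{n×1}, T_G, 0_{n×p}]]. Then T·∇W(θ₁,η) + (∇W(θ₁,η))^T T^T ≥ ρ I_{1+n} for ρ = min(2, ρ_G) > 0, for all (θ₁, η). -/

import Mathlib

open Matrix

/-- Jacobian matrix of a map `G : (Fin n → ℝ) → (Fin p → ℝ)` at a point. -/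
noncomputable def jacobian {n p : ℕ} (G : (Fin n → ℝ) → (Fin p → ℝ)) (η : Fin n → ℝ) :
    Matrix (Fin p) (Fin n) ℝ :=
  Matrix.of fun i j => fderiv ℝ G η (Pi.single j 1) i

/-- Jacobian of the map `W(θ₁,η) = (θ₁, G(η), θ₁ G(η))`, written in block form:
rows indexed by `Unit ⊕ (Fin p ⊕ Fin p)`, columns by `Unit ⊕ Fin n`. -/
noncomputable def jacW {n p : ℕ} (G : (Fin n → ℝ) → (Fin p → ℝ)) (θ₁ : ℝ) (η : Fin n → ℝ) :
    Matrix (Unit ⊕ (Fin p ⊕ Fin p)) (Unit ⊕ Fin n) ℝ :=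
  Matrix.fromBlocks (1 : Matrix Unit Unit ℝ) 0
    (Matrix.of fun i _ => Sum.elim (fun _ : Fin p => (0 : ℝ)) (fun j => G η j) i)
    (Matrix.of fun i j => Sum.elim (fun i' => jacobian G η i' j)
      (fun i' => θ₁ * jacobian G η i' j) i)

/-- The matrix `T = [[1, 0, 0], [0, T_G, 0]]` of Lemma 4. -/
def TW {n p : ℕ} (TG : Matrix (Fin n) (Fin p) ℝ) :
    Matrix (Unit ⊕ Fin n) (Unit ⊕ (Fin p ⊕ Fin p)) ℝ :=
  Matrix.fromBlocks (1 : Matrix Unit Unit ℝ) 0 0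
    (Matrix.of fun i j => Sum.elim (fun j' => TG i j') (fun _ => (0 : ℝ)) j)

lemma psd_fromBlocks_diag {m n : Type*} [Fintype m] [Fintype n]
    {A : Matrix m m ℝ} {D : Matrix n n ℝ}
    (hA : A.PosSemidef) (hD : D.PosSemidef) : (fromBlocks A 0 0 D).PosSemidef := by
  rw [posSemidef_iff_dotProduct_mulVec] at hA hD ⊢
  constructor
  · ext (i|i) (j|j) <;>
      simp [fromBlocks, conjTranspose_apply]
    · simpa using hA.1.apply i j
    · simpa using hD.1.apply i j
  · intro x
    have h1 := hA.2 (x ∘ Sum.inl)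
    have h2 := hD.2 (x ∘ Sum.inr)
    have hx : x = Sum.elim (x ∘ Sum.inl) (x ∘ Sum.inr) := (Sum.elim_comp_inl_inr x).symm
    rw [hx]
    have hstar : star (Sum.elim (x ∘ Sum.inl) (x ∘ Sum.inr)) =
        Sum.elim (star (x ∘ Sum.inl)) (star (x ∘ Sum.inr)) := by
      ext (i|i) <;> rfl
    rw [hstar, fromBlocks_mulVec, dotProduct_block]
    simp only [Matrix.zero_mulVec, add_zero, zero_add, Sum.elim_comp_inl, Sum.elim_comp_inr] at *
    positivity

lemma psd_add {m : Type*} [Fintype m] {A B : Matrix m m ℝ}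
    (hA : A.PosSemidef) (hB : B.PosSemidef) : (A + B).PosSemidef := by
  rw [posSemidef_iff_dotProduct_mulVec] at hA hB ⊢
  refine ⟨hA.1.add hB.1, fun x => ?_⟩
  have := add_nonneg (hA.2 x) (hB.2 x)
  simpa [Matrix.add_mulVec, dotProduct_add] using this

lemma psd_smul_one {m : Type*} [Fintype m] [DecidableEq m] {c : ℝ} (hc : 0 ≤ c) :
    (c • (1 : Matrix m m ℝ)).PosSemidef := by
  rw [posSemidef_iff_dotProduct_mulVec]
  refine ⟨?_, fun x => ?_⟩
  · ext i j
    simp [conjTranspose_apply, Matrix.one_apply, eq_comm]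
  · have : star x ⬝ᵥ (c • (1 : Matrix m m ℝ)) *ᵥ x = c * (star x ⬝ᵥ x) := by
      simp [Matrix.smul_mulVec, dotProduct_smul]
    rw [this]
    exact mul_nonneg hc (dotProduct_star_self_nonneg x)

theorem statement4 {n p : ℕ} (G : (Fin n → ℝ) → (Fin p → ℝ)) (hG : ContDiff ℝ 1 G)
    (TG : Matrix (Fin n) (Fin p) ℝ) (ρG : ℝ) (hρG : 0 < ρG)
    (hLMI : ∀ η : Fin n → ℝ,
      (TG * jacobian G η + (jacobian G η)ᵀ * TGᵀ -
        ρG • (1 : Matrix (Fin n) (Fin n) ℝ)).PosSemidef) :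
    ∀ (θ₁ : ℝ) (η : Fin n → ℝ),
      (TW TG * jacW G θ₁ η + (jacW G θ₁ η)ᵀ * (TW TG)ᵀ -
        (min 2 ρG) • (1 : Matrix (Unit ⊕ Fin n) (Unit ⊕ Fin n) ℝ)).PosSemidef := by
  intro θ₁ η
  set ρ : ℝ := min 2 ρG with hρ
  set J := jacobian G η with hJ
  have key : TW TG * jacW G θ₁ η + (jacW G θ₁ η)ᵀ * (TW TG)ᵀ -
      ρ • (1 : Matrix (Unit ⊕ Fin n) (Unit ⊕ Fin n) ℝ) =
      fromBlocks ((2 - ρ) • (1 : Matrix Unit Unit ℝ)) 0 0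
        (TG * J + Jᵀ * TGᵀ - ρ • (1 : Matrix (Fin n) (Fin n) ℝ)) := by
    ext (i|i) (j|j) <;>
      simp [TW, jacW, fromBlocks, Matrix.mul_apply, Matrix.one_apply,
        Fintype.sum_sum_type, Matrix.smul_apply, Matrix.sub_apply, Matrix.add_apply,
        Matrix.transpose_apply, mul_comm, hJ] <;> ring_nf
  rw [key]
  apply psd_fromBlocks_diag
  · exact psd_smul_one (by simp [hρ])
  · have hD : TG * J + Jᵀ * TGᵀ - ρ • (1 : Matrix (Fin n) (Fin n) ℝ) =
        (TG * J + Jᵀ * TGᵀ - ρG • (1 : Matrix (Fin n) (Fin n) ℝ)) +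
        (ρG - ρ) • (1 : Matrix (Fin n) (Fin n) ℝ) := by
      rw [sub_smul]; abel
    rw [hD]
    exact psd_add (hLMI η) (psd_smul_one (by simp [hρ]))
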